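/- arXiv:1112.6066 — 3 statements merged into one kernel-verified Lean document; each statement's English description precedes it below -/
import Mathlib

section
/- For γ, θ > 0 and any starting point x₀ > 0, the sequence defined by x_{n+1} = f(x_n) with f(x) = x/(1+θx) + 2γ converges to the fixed point g(γ,θ) = γ + √(γ² + 2γ/θ). -/
noncomputable def gFix (γ θ : ℝ) : ℝ := γ + Real.sqrt (γ ^ 2 + 2 * γ / θ)

/-- For γ, θ > 0 and any x₀ > 0, the orbit x_{n+1} = f(x_n) with
f(x) = x/(1+θx) + 2γ converges to the fixed point g(γ,θ). -/
theorem stmt_3 (γ θ : ℝ) (hγ : 0 < γ) (hθ : 0 < θ) (x : ℕ → ℝ) (hx0 : 0 < x 0)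
    (hrec : ∀ n, x (n + 1) = x n / (1 + θ * x n) + 2 * γ) :
    Filter.Tendsto x Filter.atTop (nhds (gFix γ θ)) := by
  set g := gFix γ θ with hgdef
  set s := Real.sqrt (γ ^ 2 + 2 * γ / θ) with hsdef
  have hsnn : 0 ≤ s := Real.sqrt_nonneg _
  have hs2 : s ^ 2 = γ ^ 2 + 2 * γ / θ := by
    apply Real.sq_sqrt
    positivity
  have hgγ : γ < s := by
    nlinarith [hs2, div_pos (by linarith : (0:ℝ) < 2 * γ) hθ]
  have hg2γ : 2 * γ < g := by
    simp only [hgdef, gFix]; linarith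
  have hgpos : 0 < g := by linarith
  have hs2' : θ * s ^ 2 = θ * γ ^ 2 + 2 * γ := by
    rw [hs2]; field_simp
  -- fixed point equation
  have hfix : g = g / (1 + θ * g) + 2 * γ := by
    have hdpos : 0 < 1 + θ * g := by positivity
    have hg : g = γ + s := rfl
    rw [hg]
    field_simp
    linear_combination hs2'
  -- positivity of orbit
  have hpos : ∀ n, 0 < x n := by
    intro n
    induction n with
    | zero => exact hx0
    | succ k ih =>
      rw [hrec k]
      have : 0 < 1 + θ * x k := by positivity
      positivity
  have hge : ∀ n, 2 * γ ≤ x (n + 1) := by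
    intro n
    rw [hrec n]
    have hxn := hpos n
    have h1 : 0 < 1 + θ * x n := by positivity
    nlinarith [div_pos hxn h1]
  -- contraction constant
  set r : ℝ := (1 / (1 + 2 * γ * θ)) ^ 2 with hrdef
  have hd : (0:ℝ) < 1 + 2 * γ * θ := by positivity
  have hr0 : 0 ≤ r := by positivity
  have hr1 : r < 1 := by
    rw [hrdef]
    have : 1 / (1 + 2 * γ * θ) < 1 := by
      rw [div_lt_one hd]; nlinarith
    nlinarith [one_div_pos.mpr hd]
  -- contraction step
  have hstep : ∀ a b : ℝ, 2 * γ ≤ a → 2 * γ ≤ b →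
      |(a / (1 + θ * a) + 2 * γ) - (b / (1 + θ * b) + 2 * γ)| ≤ r * |a - b| := by
    intro a b ha hb
    have hapos : 0 < 1 + θ * a := by nlinarith
    have hbpos : 0 < 1 + θ * b := by nlinarith
    have hkey : (a / (1 + θ * a) + 2 * γ) - (b / (1 + θ * b) + 2 * γ)
        = (a - b) / ((1 + θ * a) * (1 + θ * b)) := by
      have hane : 1 + a * θ ≠ 0 := by nlinarith
      have hbne : 1 + b * θ ≠ 0 := by nlinarith
      field_simp
      ring
    have habs : 0 ≤ |a - b| := abs_nonneg _
    have hbound : (1 + 2 * γ * θ) ^ 2 ≤ (1 + θ * a) * (1 + θ * b) := by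
      have h1 : 1 + 2 * γ * θ ≤ 1 + θ * a := by nlinarith
      have h2 : 1 + 2 * γ * θ ≤ 1 + θ * b := by nlinarith
      rw [pow_two]
      exact mul_le_mul h1 h2 hd.le (by linarith)
    rw [hkey, abs_div]
    rw [abs_of_pos (by positivity : (0:ℝ) < (1 + θ * a) * (1 + θ * b))]
    calc |a - b| / ((1 + θ * a) * (1 + θ * b))
        ≤ |a - b| / (1 + 2 * γ * θ) ^ 2 := by gcongr
      _ = r * |a - b| := by rw [hrdef]; field_simp
  -- geometric bound
  have hbound : ∀ n, |x (n + 1) - g| ≤ |x 1 - g| * r ^ n := by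
    intro n
    induction n with
    | zero => simp
    | succ k ih =>
      have h1 := hstep (x (k + 1)) g (hge k) (le_of_lt hg2γ)
      rw [← hrec (k + 1), ← hfix] at h1
      calc |x (k + 1 + 1) - g| ≤ r * |x (k + 1) - g| := h1
        _ ≤ r * (|x 1 - g| * r ^ k) := by
            exact mul_le_mul_of_nonneg_left ih hr0
        _ = |x 1 - g| * r ^ (k + 1) := by ring
  -- conclude
  have htend : Filter.Tendsto (fun n => x (n + 1)) Filter.atTop (nhds g) := by
    rw [tendsto_iff_norm_sub_tendsto_zero]
    apply squeeze_zero_norm (fun n => by simpa using hbound n)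
    have := (tendsto_pow_atTop_nhds_zero_of_lt_one hr0 hr1).const_mul |x 1 - g|
    simpa using this
  exact (Filter.tendsto_add_atTop_iff_nat 1).mp htend
end

section
/- Let 0 < γ_min ≤ γ_max and 0 < θ_min ≤ θ_max, and write g_min = g(γ_min, θ_max), g_max = g(γ_max, θ_min) where g(γ,θ) = γ + √(γ² + 2γ/θ). If a sequence (x_j) of positive reals satisfies x_{j+1} = x_j/(1+θ_j x_j) + 2γ_j for some sequences γ_j ∈ [γ_min, γ_max] and θ_j ∈ [θ_min, θ_max], and x_N ∈ [g_min, g_max] for some N, then x_j ∈ [g_min, g_max] for all j ≥ N. -/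
lemma gFix_pos {γ θ : ℝ} (hγ : 0 < γ) (hθ : 0 < θ) : 0 < gFix γ θ := by
  have : 0 ≤ Real.sqrt (γ ^ 2 + 2 * γ / θ) := Real.sqrt_nonneg _
  unfold gFix; linarith

lemma gFix_fixed {γ θ : ℝ} (hγ : 0 < γ) (hθ : 0 < θ) :
    gFix γ θ / (1 + θ * gFix γ θ) + 2 * γ = gFix γ θ := by
  have harg : 0 ≤ γ ^ 2 + 2 * γ / θ := by positivity
  have hs : Real.sqrt (γ ^ 2 + 2 * γ / θ) ^ 2 = γ ^ 2 + 2 * γ / θ :=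
    Real.sq_sqrt harg
  have hg : 0 < gFix γ θ := gFix_pos hγ hθ
  have hd : 0 < 1 + θ * gFix γ θ := by nlinarith
  have key : gFix γ θ ^ 2 - 2 * γ * gFix γ θ = 2 * γ / θ := by
    unfold gFix; nlinarith
  field_simp
  have h2 : θ * (2 * γ / θ) = 2 * γ := by field_simp
  nlinarith [key, h2]

lemma frac_le {θ1 θ2 a b : ℝ} (h0 : 0 < a) (hab : a ≤ b) (hθ1 : 0 < θ1)
    (hθ12 : θ1 ≤ θ2) : a / (1 + θ2 * a) ≤ b / (1 + θ1 * b) := by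
  have ha : 0 < 1 + θ2 * a := by nlinarith
  have hb : 0 < 1 + θ1 * b := by nlinarith
  rw [div_le_div_iff₀ ha hb]
  nlinarith [mul_nonneg (mul_nonneg h0.le (h0.le.trans hab)) (sub_nonneg.mpr hθ12)]

/-- The interval [g(γ_min, θ_max), g(γ_max, θ_min)] is forward
invariant for the non-autonomous recursion x_{j+1} = x_j/(1+θ_j x_j) + 2γ_j with
γ_j ∈ [γ_min, γ_max], θ_j ∈ [θ_min, θ_max]. -/
theorem stmt_4 (γmin γmax θmin θmax : ℝ)
    (hγ : 0 < γmin) (hγ' : γmin ≤ γmax) (hθ : 0 < θmin) (hθ' : θmin ≤ θmax)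
    (γs θs x : ℕ → ℝ)
    (hγs : ∀ j, γs j ∈ Set.Icc γmin γmax) (hθs : ∀ j, θs j ∈ Set.Icc θmin θmax)
    (hpos : ∀ j, 0 < x j)
    (hrec : ∀ j, x (j + 1) = x j / (1 + θs j * x j) + 2 * γs j)
    (N : ℕ) (hN : x N ∈ Set.Icc (gFix γmin θmax) (gFix γmax θmin)) :
    ∀ j, N ≤ j → x j ∈ Set.Icc (gFix γmin θmax) (gFix γmax θmin) := by
  have hγmax : 0 < γmax := lt_of_lt_of_le hγ hγ'
  have hθmax : 0 < θmax := lt_of_lt_of_le hθ hθ'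
  have hgmin : 0 < gFix γmin θmax := gFix_pos hγ hθmax
  have hgmax : 0 < gFix γmax θmin := gFix_pos hγmax hθ
  intro j hj
  induction j, hj using Nat.le_induction with
  | base => exact hN
  | succ j hj ih =>
    obtain ⟨ih1, ih2⟩ := ih
    obtain ⟨hγ1, hγ2⟩ := hγs j
    obtain ⟨hθ1, hθ2⟩ := hθs j
    have hθj : 0 < θs j := lt_of_lt_of_le hθ hθ1
    constructor
    · have h1 : gFix γmin θmax / (1 + θmax * gFix γmin θmax) ≤
          x j / (1 + θs j * x j) := frac_le hgmin ih1 hθj hθ2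
      have := gFix_fixed hγ hθmax
      rw [hrec j]; linarith
    · have h1 : x j / (1 + θs j * x j) ≤
          gFix γmax θmin / (1 + θmin * gFix γmax θmin) :=
        frac_le (hpos j) ih2 hθ hθ1
      have := gFix_fixed hγmax hθ
      rw [hrec j]; linarith
end

section
/- Let X be a metric space and Υ : X → Σ⁺ a bijection onto its image such that Υ is Lipschitz into (Υ(X), d_λ) and Υ⁻¹ is Lipschitz from (Υ(X), d_μ) onto X, where Υ(X) contains a cylinder [α]_N of Σ⁺. Then −ln(u−1)/ln λ ≤ dim_H X ≤ −ln(u−1)/ln μ. -/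
open Classical MeasureTheory
open scoped ENNReal NNReal

/-- One-sided shift space on `u` symbols with no consecutive repetitions. -/
def OneSidedShift (u : ℕ) := {α : ℕ → Fin u // ∀ i, α i ≠ α (i + 1)}

/-- Length of the longest common initial block of two sequences. -/
noncomputable def initBlock {u : ℕ} (α β : OneSidedShift u) : ℕ :=
  sSup {n : ℕ | ∀ i < n, α.1 i = β.1 i}

/-- The metric d_θ on the one-sided shift space. -/
noncomputable def dTheta {u : ℕ} (θ : ℝ) (α β : OneSidedShift u) : ℝ :=
  if α = β then 0 else θ ^ initBlock α β

/-- The cylinder [α]_N : sequences agreeing with α in the first N coordinates. -/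
def cylinder {u : ℕ} (α : OneSidedShift u) (N : ℕ) : Set (OneSidedShift u) :=
  {β | ∀ i < N, β.1 i = α.1 i}

/-- succeessor-symbol map: `nxt p j` is the `j`-th element of `Fin u \ {p}`. -/
def nxt {u : ℕ} (p : Fin u) (j : Fin (u-1)) : Fin u :=
  if h : (j : ℕ) < (p : ℕ) then ⟨j, lt_trans h p.isLt⟩ else ⟨j + 1, by omega⟩

/-- inverse of `nxt`: the code of `q` relative to `p`. -/
def decd {u : ℕ} (p q : Fin u) : ℕ := if (q : ℕ) < (p : ℕ) then q else (q : ℕ) - 1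

lemma nxt_ne {u : ℕ} (p : Fin u) (j : Fin (u-1)) : nxt p j ≠ p := by
  unfold nxt; split <;> (intro h; apply_fun Fin.val at h; simp at h; omega)

lemma decd_nxt {u : ℕ} (p : Fin u) (j : Fin (u-1)) : decd p (nxt p j) = (j : ℕ) := by
  unfold nxt decd; split <;> simp <;> omega

lemma nxt_decd {u : ℕ} {p q : Fin u} (h : q ≠ p) (hlt : decd p q < u - 1) :
    nxt p ⟨decd p q, hlt⟩ = q := by
  have : (q : ℕ) ≠ (p : ℕ) := fun hv => h (Fin.ext hv)
  unfold nxt decd; apply Fin.ext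
  rcases lt_or_gt_of_ne this with hc | hc
  · simp [hc]
  · have h1 : ¬ ((q:ℕ) < (p:ℕ)) := by omega
    simp only [h1, if_false]
    have h2 : ¬ ((q:ℕ) - 1 < (p:ℕ)) := by omega
    simp [h2]; omega

lemma decd_lt {u : ℕ} (hu : 2 ≤ u) {p q : Fin u} (h : q ≠ p) : decd p q < u - 1 := by
  have : (q : ℕ) ≠ (p : ℕ) := fun hv => h (Fin.ext hv)
  have hq := q.isLt; have hp := p.isLt
  unfold decd; split <;> omega

/-- the sequence starting at `p0` with successor codes `d`. -/
def seqFrom {u : ℕ} (p0 : Fin u) (d : ℕ → Fin (u-1)) : ℕ → Fin u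
  | 0 => p0
  | k+1 => nxt (seqFrom p0 d k) (d k)

lemma initBlock_ge {u : ℕ} {α β : OneSidedShift u} (h : α ≠ β) {k : ℕ}
    (hk : ∀ i < k, α.1 i = β.1 i) : k ≤ initBlock α β := by
  have hne : ∃ i, α.1 i ≠ β.1 i := by
    by_contra hc
    push_neg at hc
    exact h (Subtype.ext (funext hc))
  obtain ⟨i, hi⟩ := hne
  have hbdd : BddAbove {n : ℕ | ∀ j < n, α.1 j = β.1 j} := by
    refine ⟨i, fun n hn => ?_⟩
    by_contra hc
    exact hi (hn i (by omega))
  exact le_csSup hbdd hk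

lemma initBlock_spec {u : ℕ} {α β : OneSidedShift u} (h : α ≠ β) :
    ∀ i < initBlock α β, α.1 i = β.1 i := by
  have hne : ∃ i, α.1 i ≠ β.1 i := by
    by_contra hc
    push_neg at hc
    exact h (Subtype.ext (funext hc))
  obtain ⟨i, hi⟩ := hne
  have hbdd : BddAbove {n : ℕ | ∀ j < n, α.1 j = β.1 j} := by
    refine ⟨i, fun n hn => ?_⟩
    by_contra hc
    exact hi (hn i (by omega))
  have hmem : 0 ∈ {n : ℕ | ∀ j < n, α.1 j = β.1 j} := by simp
  exact Nat.sSup_mem ⟨0, hmem⟩ hbdd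

lemma dTheta_le_of_agree {u : ℕ} {θ : ℝ} (h0 : 0 < θ) (h1 : θ ≤ 1)
    {α β : OneSidedShift u} {k : ℕ} (hk : ∀ i < k, α.1 i = β.1 i) :
    dTheta θ α β ≤ θ ^ k := by
  unfold dTheta
  split
  · positivity
  · exact pow_le_pow_of_le_one h0.le h1 (initBlock_ge (by assumption) hk)

section digits

variable {b : ℕ} (hb : 2 ≤ b)

include hb

lemma summable_digitSeries (c : ℕ → ℕ) (hc : ∀ k, c k < b) :
    Summable (fun k => (c k : ℝ) / (b:ℝ)^(k+1)) := by
  have hb1 : (1:ℝ) < (b:ℝ) := by exact_mod_cast (by omega : 1 < b)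
  have hb0 : (0:ℝ) < (b:ℝ) := by linarith
  have hg : Summable (fun k : ℕ => ((b:ℝ)⁻¹)^k) :=
    summable_geometric_of_lt_one (by positivity)
      (by rw [inv_lt_one_iff₀]; right; exact hb1)
  refine hg.of_nonneg_of_le (fun k => by positivity) (fun k => ?_)
  rw [div_le_iff₀ (by positivity), inv_pow, inv_mul_eq_div, le_div_iff₀ (by positivity)]
  have h1 : (c k : ℝ) ≤ (b:ℝ) := by exact_mod_cast (hc k).le
  calc (c k : ℝ) * (b:ℝ)^k ≤ (b:ℝ) * (b:ℝ)^k :=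
        mul_le_mul_of_nonneg_right h1 (by positivity)
    _ = (b:ℝ)^(k+1) := (pow_succ' (b:ℝ) k).symm

lemma digitSeries_nonneg (c : ℕ → ℕ) :
    0 ≤ ∑' k, (c k : ℝ) / (b:ℝ)^(k+1) :=
  tsum_nonneg (fun k => by positivity)

lemma digitSeries_le_one (c : ℕ → ℕ) (hc : ∀ k, c k < b) :
    ∑' k, (c k : ℝ) / (b:ℝ)^(k+1) ≤ 1 := by
  have hb1 : (1:ℝ) < (b:ℝ) := by exact_mod_cast (by omega : 1 < b)
  have hb0 : (0:ℝ) < (b:ℝ) := by linarith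
  have hsum2 : Summable (fun k : ℕ => ((b:ℝ) - 1) / (b:ℝ)^(k+1)) := by
    have h := summable_digitSeries hb (fun _ => b - 1) (fun _ => Nat.sub_lt (by omega) one_pos)
    simpa only [Nat.cast_sub (by omega : 1 ≤ b), Nat.cast_one] using h
  calc ∑' k, (c k : ℝ) / (b:ℝ)^(k+1) ≤ ∑' k : ℕ, ((b:ℝ) - 1) / (b:ℝ)^(k+1) := by
        apply Summable.tsum_le_tsum _ (summable_digitSeries hb c hc) hsum2
        intro k
        apply div_le_div_of_nonneg_right _ (by positivity)
        have h2 : (c k : ℝ) + 1 ≤ (b:ℝ) := by exact_mod_cast hc k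
        linarith
      _ = 1 := by
        have h3 : ∀ k : ℕ, ((b:ℝ) - 1) / (b:ℝ)^(k+1) = ((b:ℝ)-1) * (b:ℝ)⁻¹ * ((b:ℝ)⁻¹)^k := by
          intro k
          rw [pow_succ, div_eq_mul_inv, mul_inv, inv_pow]
          ring
        rw [tsum_congr h3, tsum_mul_left, tsum_geometric_of_lt_one (by positivity)
          (by rw [inv_lt_one_iff₀]; right; exact hb1)]
        have h4 : (b:ℝ) - 1 ≠ 0 := by linarith
        have h5 : (1:ℝ) - (b:ℝ)⁻¹ = ((b:ℝ) - 1) / b := by field_simp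
        rw [h5]
        field_simp

lemma digitSeries_tail (c : ℕ → ℕ) (hc : ∀ k, c k < b) (K : ℕ) :
    ∑' k, (c k : ℝ) / (b:ℝ)^(k+1) ∈
      Set.Icc (∑ i ∈ Finset.range K, (c i : ℝ) / (b:ℝ)^(i+1))
        ((∑ i ∈ Finset.range K, (c i : ℝ) / (b:ℝ)^(i+1)) + ((b:ℝ)^K)⁻¹) := by
  have hb0 : (0:ℝ) < (b:ℝ) := by exact_mod_cast (by omega : 0 < b)
  have hsum := summable_digitSeries hb c hc
  rw [← Summable.sum_add_tsum_nat_add K hsum]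
  have hshift : ∀ k : ℕ, (c (k + K) : ℝ) / (b:ℝ)^(k + K + 1)
      = ((b:ℝ)^K)⁻¹ * ((c (k + K) : ℝ) / (b:ℝ)^(k+1)) := by
    intro k
    have : (k + K) + 1 = (k + 1) + K := by omega
    rw [this, pow_add]
    field_simp
  constructor
  · have : 0 ≤ ∑' k, (c (k + K) : ℝ) / (b:ℝ)^(k + K + 1) :=
      tsum_nonneg (fun k => by positivity)
    linarith
  · have : ∑' k, (c (k + K) : ℝ) / (b:ℝ)^(k + K + 1) ≤ ((b:ℝ)^K)⁻¹ := by
      rw [tsum_congr hshift, tsum_mul_left]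
      have h1 := digitSeries_le_one hb (fun k => c (k + K)) (fun k => hc _)
      calc ((b:ℝ)^K)⁻¹ * ∑' k, (c (k + K) : ℝ) / (b:ℝ)^(k+1)
          ≤ ((b:ℝ)^K)⁻¹ * 1 := by
            apply mul_le_mul_of_nonneg_left h1 (by positivity)
        _ = ((b:ℝ)^K)⁻¹ := mul_one _
    linarith

lemma digitSeries_dist_le (c c' : ℕ → ℕ) (hc : ∀ k, c k < b) (hc' : ∀ k, c' k < b)
    {K : ℕ} (hagree : ∀ k < K, c k = c' k) :
    |(∑' k, (c k : ℝ) / (b:ℝ)^(k+1)) - ∑' k, (c' k : ℝ) / (b:ℝ)^(k+1)| ≤ ((b:ℝ)^K)⁻¹ := by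
  have h1 := digitSeries_tail hb c hc K
  have h2 := digitSeries_tail hb c' hc' K
  have hP : ∑ i ∈ Finset.range K, (c i : ℝ) / (b:ℝ)^(i+1)
      = ∑ i ∈ Finset.range K, (c' i : ℝ) / (b:ℝ)^(i+1) := by
    apply Finset.sum_congr rfl
    intro i hi
    rw [hagree i (Finset.mem_range.1 hi)]
  rw [hP] at h1
  obtain ⟨h1a, h1b⟩ := h1
  obtain ⟨h2a, h2b⟩ := h2
  rw [abs_sub_le_iff]
  constructor <;> linarith

lemma exists_digit_expansion {t : ℝ} (ht : t ∈ Set.Ico (0:ℝ) 1) :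
    ∃ d : ℕ → ℕ, (∀ k, d k < b) ∧ ∑' k, (d k : ℝ) / (b:ℝ)^(k+1) = t := by
  obtain ⟨ht0, ht1⟩ := ht
  have hb0 : (0:ℝ) < (b:ℝ) := by exact_mod_cast (by omega : 0 < b)
  have hb1 : (1:ℝ) < (b:ℝ) := by exact_mod_cast (by omega : 1 < b)
  set a : ℕ → ℕ := fun n => ⌊t * (b:ℝ)^n⌋₊ with ha
  have hfl : ∀ n, ((a n : ℝ)) ≤ t * (b:ℝ)^n ∧ t * (b:ℝ)^n < (a n : ℝ) + 1 := by
    intro n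
    exact ⟨Nat.floor_le (by positivity), Nat.lt_floor_add_one _⟩
  have hkey : ∀ k, b * a k ≤ a (k+1) ∧ a (k+1) < b * a k + b := by
    intro k
    obtain ⟨h1, h2⟩ := hfl k
    constructor
    · apply Nat.le_floor
      push_cast
      calc ((b:ℝ)) * (a k) ≤ (b:ℝ) * (t * (b:ℝ)^k) := by
            apply mul_le_mul_of_nonneg_left h1 (by positivity)
        _ = t * (b:ℝ)^(k+1) := by ring
    · rw [ha]
      apply Nat.floor_lt (by positivity) |>.mpr
      push_cast
      calc t * (b:ℝ)^(k+1) = (b:ℝ) * (t * (b:ℝ)^k) := by ring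
        _ < (b:ℝ) * ((a k : ℝ) + 1) := by
            apply mul_lt_mul_of_pos_left h2 (by positivity)
        _ = (b:ℝ) * (a k) + (b:ℝ) := by ring
  set d : ℕ → ℕ := fun k => a (k+1) - b * a k with hd
  have hdlt : ∀ k, d k < b := fun k => by
    have h := hkey k
    simp only [hd]
    omega
  have hdcast : ∀ k, (d k : ℝ) = (a (k+1) : ℝ) - (b:ℝ) * (a k : ℝ) := fun k => by
    have := (hkey k).1
    rw [hd]
    push_cast [this]
    ring
  refine ⟨d, hdlt, ?_⟩
  set F : ℕ → ℝ := fun n => (a n : ℝ) / (b:ℝ)^n with hF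
  have hpartial : ∀ n, ∑ i ∈ Finset.range n, (d i : ℝ) / (b:ℝ)^(i+1) = F n := by
    intro n
    have hterm : ∀ i, (d i : ℝ) / (b:ℝ)^(i+1) = F (i+1) - F i := by
      intro i
      rw [hdcast i, hF]
      simp only []
      rw [pow_succ]
      field_simp
    rw [Finset.sum_congr rfl (fun i _ => hterm i), Finset.sum_range_sub F n]
    have ha0 : a 0 = 0 := by
      rw [ha]
      simp only [pow_zero, mul_one]
      exact Nat.floor_eq_zero.mpr ht1
    simp [hF, ha0]
  have hFlim : Filter.Tendsto F Filter.atTop (nhds t) := by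
    rw [← tendsto_sub_nhds_zero_iff]
    have hgt : Filter.Tendsto (fun n : ℕ => ((b:ℝ)⁻¹)^n) Filter.atTop (nhds 0) :=
      tendsto_pow_atTop_nhds_zero_of_lt_one (by positivity)
        (by rw [inv_lt_one_iff₀]; right; exact hb1)
    apply squeeze_zero_norm _ hgt
    · intro n
      obtain ⟨h1, h2⟩ := hfl n
      have hbn : (0:ℝ) < (b:ℝ)^n := by positivity
      rw [Real.norm_eq_abs, abs_le]
      constructor
      · rw [hF, inv_pow, neg_le, neg_sub, sub_le_iff_le_add]
        have h3 : t ≤ ((a n : ℝ) + 1) / (b:ℝ)^n := by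
          rw [le_div_iff₀ hbn]; linarith
        have h4 : ((a n : ℝ) + 1) / (b:ℝ)^n = ((b:ℝ)^n)⁻¹ + (a n : ℝ) / (b:ℝ)^n := by
          rw [add_div, one_div]; ring
        simp only []
        linarith [h4 ▸ h3]
      · rw [hF]
        simp only []
        have : (a n : ℝ) / (b:ℝ)^n ≤ t := by
          rw [div_le_iff₀ hbn]; linarith
        have h3 : (0:ℝ) < ((b:ℝ)⁻¹)^n := by positivity
        linarith
  have hsummable := summable_digitSeries hb d hdlt
  have hps := hsummable.hasSum.tendsto_sum_nat
  rw [Filter.tendsto_congr hpartial] at hps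
  exact tendsto_nhds_unique hps hFlim

end digits


/-- if Υ : X → Σ⁺ is injective, Lipschitz into (Υ(X), d_λ), with
Lipschitz inverse from (Υ(X), d_μ), and Υ(X) contains a cylinder, then
−ln(u−1)/ln λ ≤ dim_H X ≤ −ln(u−1)/ln μ. -/
theorem stmt_12 {X : Type*} [MetricSpace X] (u : ℕ) (hu : 3 ≤ u)
    (lam mu : ℝ) (hlam : lam ∈ Set.Ioo (0 : ℝ) 1) (hmu : mu ∈ Set.Ioo (0 : ℝ) 1)
    (Υ : X → OneSidedShift u) (hinj : Function.Injective Υ)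
    (L L' : ℝ) (hL : 0 < L) (hL' : 0 < L')
    (hLip : ∀ x y : X, dTheta lam (Υ x) (Υ y) ≤ L * dist x y)
    (hLip' : ∀ x y : X, dist x y ≤ L' * dTheta mu (Υ x) (Υ y))
    (α : OneSidedShift u) (N : ℕ) (hcyl : cylinder α N ⊆ Set.range Υ) :
    ENNReal.ofReal (-Real.log ((u : ℝ) - 1) / Real.log lam) ≤
        dimH (Set.univ : Set X) ∧
      dimH (Set.univ : Set X) ≤
        ENNReal.ofReal (-Real.log ((u : ℝ) - 1) / Real.log mu) := by
  obtain ⟨hlam0, hlam1⟩ := hlam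
  obtain ⟨hmu0, hmu1⟩ := hmu
  have hb2 : 2 ≤ u - 1 := by omega
  set b : ℕ := u - 1 with hbdef
  have hbR : ((u:ℝ) - 1) = ((b:ℕ):ℝ) := by
    rw [hbdef, Nat.cast_sub (by omega : 1 ≤ u), Nat.cast_one]
  have hb0R : (0:ℝ) < (b:ℝ) := by exact_mod_cast (by omega : 0 < b)
  have hb1R : (1:ℝ) < (b:ℝ) := by exact_mod_cast (by omega : 1 < b)
  have hlogb : 0 < Real.log b := Real.log_pos hb1R
  -- digits of a point
  have hadm : ∀ (x : X) (k : ℕ), (Υ x).1 (N+k+1) ≠ (Υ x).1 (N+k) :=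
    fun x k => ((Υ x).2 (N+k)).symm
  set fdig : X → ℕ → ℕ := fun x k => decd ((Υ x).1 (N+k)) ((Υ x).1 (N+k+1)) with hfdig
  have hfdig_lt : ∀ x k, fdig x k < b := fun x k => decd_lt (by omega) (hadm x k)
  set g : X → ℝ := fun x => ∑' k, (fdig x k : ℝ) / (b:ℝ)^(k+1) with hg
  set Y : Set X := {x | Υ x ∈ cylinder α N} with hY
  constructor
  · -- LOWER BOUND
    set r : ℝ := -Real.log ((u : ℝ) - 1) / Real.log lam with hr
    have hloglam : Real.log lam < 0 := Real.log_neg hlam0 hlam1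
    have hr0 : 0 < r := by
      rw [hr, hbR, div_pos_iff]
      right
      exact ⟨by linarith, hloglam⟩
    have hrkey : Real.log lam * r = -Real.log ((u:ℝ) - 1) := by
      have hne : Real.log lam ≠ 0 := ne_of_lt hloglam
      rw [hr, mul_div_assoc', mul_comm (Real.log lam) (-Real.log ((u:ℝ)-1)),
        mul_div_cancel_right₀ _ hne]
    -- rpow identity
    have hrpow : ∀ m : ℕ, ((lam ^ m : ℝ)) ^ r = (((b:ℝ)) ^ m)⁻¹ := by
      intro m
      rw [Real.rpow_def_of_pos (pow_pos hlam0 m), Real.log_pow]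
      have h1 : (m : ℝ) * Real.log lam * r = -((m:ℝ) * Real.log ((b:ℕ):ℝ)) := by
        rw [mul_assoc, hrkey, hbR]
        ring
      rw [h1, Real.exp_neg]
      congr 1
      rw [← Real.log_pow, Real.exp_log (by positivity)]
    -- Hölder estimate
    set Creal : ℝ := (b:ℝ)^(N+1) * L ^ r with hCreal
    have hCreal0 : 0 < Creal := by
      rw [hCreal]
      positivity
    have hHolderReal : ∀ x ∈ Y, ∀ y ∈ Y, |g x - g y| ≤ Creal * (dist x y) ^ r := by
      intro x hx y hy
      by_cases hxy : Υ x = Υ y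
      · have : x = y := hinj hxy
        subst this
        simp [hCreal0.le, Real.rpow_nonneg dist_nonneg, mul_nonneg]
        positivity
      · set m : ℕ := initBlock (Υ x) (Υ y) with hm
        have hspec := initBlock_spec hxy
        have hlamm : lam ^ m ≤ L * dist x y := by
          have := hLip x y
          rwa [dTheta, if_neg hxy] at this
        -- digits agree below m - N - 1
        have hagree : ∀ k < m - N - 1, fdig x k = fdig y k := by
          intro k hk
          have h1 : N + k < m := by omega
          have h2 : N + k + 1 < m := by omega
          rw [hfdig]
          simp only []
          rw [hspec _ h1, hspec _ h2]
        have hd1 := digitSeries_dist_le hb2 (fdig x) (fdig y) (hfdig_lt x) (hfdig_lt y) hagree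
        have hstep1 : (((b:ℝ))^(m - N - 1))⁻¹ ≤ (b:ℝ)^(N+1) * (((b:ℝ))^m)⁻¹ := by
          have h1 : (0:ℝ) < (b:ℝ)^m := by positivity
          have h2 : (0:ℝ) < (b:ℝ)^(m-N-1) := by positivity
          rw [inv_eq_one_div, ← div_eq_mul_inv, div_le_div_iff₀ h2 h1, one_mul, ← pow_add]
          exact pow_le_pow_right₀ hb1R.le (by omega)
        have hstep2 : ((((b:ℝ))^m)⁻¹ : ℝ) ≤ (L * dist x y) ^ r := by
          rw [← hrpow m]
          exact Real.rpow_le_rpow (by positivity) hlamm hr0.le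
        calc |g x - g y| ≤ (((b:ℝ))^(m - N - 1))⁻¹ := hd1
          _ ≤ (b:ℝ)^(N+1) * (((b:ℝ))^m)⁻¹ := hstep1
          _ ≤ (b:ℝ)^(N+1) * (L * dist x y) ^ r := by
              apply mul_le_mul_of_nonneg_left hstep2 (by positivity)
          _ = Creal * (dist x y) ^ r := by
              rw [hCreal, Real.mul_rpow hL.le dist_nonneg]
              ring
    -- surjectivity onto [0,1)
    have hsurj : Set.Ico (0:ℝ) 1 ⊆ g '' Y := by
      intro t ht
      obtain ⟨d, hdlt, hdsum⟩ := exists_digit_expansion hb2 ht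
      set dfin : ℕ → Fin (u - 1) := fun k => ⟨d k, hdlt k⟩ with hdfin
      set σfun : ℕ → Fin u := fun i =>
        if i < N then α.1 i else seqFrom (α.1 N) dfin (i - N) with hσfun
      have hσadm : ∀ i, σfun i ≠ σfun (i+1) := by
        intro i
        by_cases h1 : i + 1 < N
        · simp only [hσfun, if_pos (by omega : i < N), if_pos h1]
          exact α.2 i
        · by_cases h2 : i < N
          · have hiN : i + 1 = N := by omega
            simp only [hσfun, if_pos h2, if_neg h1, hiN, Nat.sub_self, lt_irrefl, if_false]
            show α.1 i ≠ seqFrom (α.1 N) dfin 0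
            rw [show seqFrom (α.1 N) dfin 0 = α.1 N from rfl, ← hiN]
            exact α.2 i
          · simp only [hσfun, if_neg h2, if_neg h1]
            rw [show i + 1 - N = (i - N) + 1 by omega]
            exact (nxt_ne _ _).symm
      have hσcyl : (⟨σfun, hσadm⟩ : OneSidedShift u) ∈ cylinder α N := by
        intro i hi
        simp only [hσfun, if_pos hi]
      obtain ⟨x, hx⟩ := hcyl hσcyl
      refine ⟨x, ?_, ?_⟩
      · rw [hY]
        show Υ x ∈ cylinder α N
        rw [hx]
        exact hσcyl
      · rw [hg]
        have hdig : ∀ k, fdig x k = d k := by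
          intro k
          rw [hfdig]
          simp only [hx]
          show decd (σfun (N+k)) (σfun (N+k+1)) = d k
          have e1 : σfun (N+k) = seqFrom (α.1 N) dfin k := by
            simp only [hσfun, if_neg (by omega : ¬ N + k < N)]
            congr 1
            omega
          have e2 : σfun (N+k+1) = seqFrom (α.1 N) dfin (k+1) := by
            simp only [hσfun, if_neg (by omega : ¬ N + k + 1 < N)]
            congr 1
            omega
          rw [e1, e2, show seqFrom (α.1 N) dfin (k+1) = nxt (seqFrom (α.1 N) dfin k) (dfin k)
            from rfl, decd_nxt]
        calc ∑' k, (fdig x k : ℝ) / (b:ℝ)^(k+1) = ∑' k, (d k : ℝ) / (b:ℝ)^(k+1) := by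
              apply tsum_congr
              intro k
              rw [hdig k]
          _ = t := hdsum
    -- conclude
    set rr : ℝ≥0 := Real.toNNReal r with hrr
    have hrrpos : 0 < rr := Real.toNNReal_pos.mpr hr0
    have hHolder : HolderOnWith (Real.toNNReal Creal) rr g Y := by
      intro x hx y hy
      have h := hHolderReal x hx y hy
      rw [edist_dist, edist_dist, Real.dist_eq]
      calc ENNReal.ofReal |g x - g y| ≤ ENNReal.ofReal (Creal * dist x y ^ r) :=
            ENNReal.ofReal_le_ofReal h
        _ = ENNReal.ofReal Creal * ENNReal.ofReal (dist x y ^ r) := by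
            rw [ENNReal.ofReal_mul hCreal0.le]
        _ = (Real.toNNReal Creal : ℝ≥0∞) * ENNReal.ofReal (dist x y) ^ (rr : ℝ) := by
            congr 1
            have hrreq : ((rr : ℝ≥0) : ℝ) = r := Real.coe_toNNReal _ hr0.le
            rw [← hrreq, ENNReal.ofReal_rpow_of_nonneg dist_nonneg rr.coe_nonneg]
    have him : dimH (Set.Ico (0:ℝ) 1) ≤ dimH Y / rr :=
      le_trans (dimH_mono hsurj) (hHolder.dimH_image_le hrrpos)
    have hIco : dimH (Set.Ico (0:ℝ) 1) = 1 := by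
      rw [Real.dimH_of_mem_nhds (Ico_mem_nhds (by norm_num : (0:ℝ) < 1/2) (by norm_num))]
      simp [Module.finrank_self]
    rw [hIco] at him
    rw [ENNReal.le_div_iff_mul_le (Or.inl (by exact_mod_cast hrrpos.ne'))
      (Or.inl ENNReal.coe_ne_top), one_mul] at him
    have : ENNReal.ofReal r = (rr : ℝ≥0∞) := rfl
    rw [this]
    exact le_trans him (dimH_mono (Set.subset_univ Y))
  · -- UPPER BOUND
    borelize X
    set s0 : ℝ := -Real.log ((u : ℝ) - 1) / Real.log mu with hs0def
    have hlogmu : Real.log mu < 0 := Real.log_neg hmu0 hmu1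
    have hs00 : 0 < s0 := by
      rw [hs0def, hbR, div_pos_iff]
      right
      exact ⟨by linarith, hlogmu⟩
    apply dimH_le
    intro d' hd'
    by_contra hcon
    push_neg at hcon
    have hs0d : s0 < (d' : ℝ) := by
      rw [← ENNReal.ofReal_coe_nnreal] at hcon
      exact (ENNReal.ofReal_lt_ofReal_iff_of_nonneg hs00.le).mp hcon
    set d : ℝ := (d' : ℝ) with hddef
    have hd0 : 0 < d := lt_trans hs00 hs0d
    have hz : 0 < u - 1 := by omega
    -- the covering sets
    set t : ∀ n : ℕ, Fin u × (Fin n → Fin (u-1)) → Set X := fun n c =>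
      {x | ∀ i ≤ n, (Υ x).1 i =
        seqFrom c.1 (fun k => if h : k < n then c.2 ⟨k, h⟩ else ⟨0, hz⟩) i} with ht
    have hcover : ∀ n : ℕ, (Set.univ : Set X) ⊆ ⋃ c, t n c := by
      intro n x _
      set w : ℕ → Fin (u-1) := fun k =>
        ⟨decd ((Υ x).1 k) ((Υ x).1 (k+1)), decd_lt (by omega) ((Υ x).2 k).symm⟩ with hw
      refine Set.mem_iUnion.2 ⟨⟨(Υ x).1 0, fun k => w k.1⟩, ?_⟩
      rw [ht]
      intro i
      induction i with
      | zero => intro _; rfl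
      | succ k ih =>
        intro hk
        have hkn : k < n := by omega
        show (Υ x).1 (k+1) = seqFrom _ _ (k+1)
        rw [show ∀ p e, seqFrom p e (k+1) = nxt (seqFrom p e k) (e k) from fun p e => rfl,
          ← ih (by omega)]
        simp only [dif_pos hkn]
        exact (nxt_decd ((Υ x).2 k).symm (decd_lt (by omega) ((Υ x).2 k).symm)).symm
    have hdiam : ∀ n : ℕ, ∀ c, EMetric.diam (t n c) ≤ ENNReal.ofReal (L' * mu^(n+1)) := by
      intro n c
      apply EMetric.diam_le
      intro x hx y hy
      rw [edist_dist]
      apply ENNReal.ofReal_le_ofReal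
      have hagree : ∀ i < n + 1, (Υ x).1 i = (Υ y).1 i := by
        intro i hi
        rw [hx i (by omega), hy i (by omega)]
      calc dist x y ≤ L' * dTheta mu (Υ x) (Υ y) := hLip' x y
        _ ≤ L' * mu^(n+1) :=
            mul_le_mul_of_nonneg_left (dTheta_le_of_agree hmu0 hmu1.le hagree) hL'.le
    have hrtend : Filter.Tendsto (fun n : ℕ => ENNReal.ofReal (L' * mu^(n+1)))
        Filter.atTop (nhds 0) := by
      have h1 : Filter.Tendsto (fun n : ℕ => L' * mu^(n+1)) Filter.atTop (nhds 0) := by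
        have h2 := ((tendsto_pow_atTop_nhds_zero_of_lt_one hmu0.le hmu1).comp
          (Filter.tendsto_add_atTop_nat 1)).const_mul L'
        simpa using h2
      simpa using ENNReal.tendsto_ofReal h1
    have hmeas := Measure.hausdorffMeasure_le_liminf_sum d (Set.univ : Set X)
      (fun n => ENNReal.ofReal (L' * mu^(n+1))) hrtend t
      (Filter.Eventually.of_forall hdiam) (Filter.Eventually.of_forall hcover)
    -- bound on the sums
    set q : ℝ := (b:ℝ) * mu ^ d with hq
    have hq0 : (0:ℝ) ≤ q := by
      rw [hq]
      positivity
    have hmud : mu ^ d < ((b:ℝ))⁻¹ := by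
      have hs0eq : s0 = Real.log b / (-Real.log mu) := by
        rw [hs0def, hbR, neg_div, div_neg]
      have h1 : Real.log ((b:ℝ)) < d * (-Real.log mu) := by
        rw [hs0eq, div_lt_iff₀ (by linarith : (0:ℝ) < -Real.log mu)] at hs0d
        linarith
      rw [Real.rpow_def_of_pos hmu0,
        show ((b:ℝ))⁻¹ = Real.exp (-Real.log b) by
          rw [Real.exp_neg, Real.exp_log hb0R]]
      apply Real.exp_lt_exp.mpr
      nlinarith
    have hq1 : q < 1 := by
      rw [hq]
      calc (b:ℝ) * mu ^ d < (b:ℝ) * ((b:ℝ))⁻¹ := by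
            apply mul_lt_mul_of_pos_left hmud hb0R
        _ = 1 := mul_inv_cancel₀ (ne_of_gt hb0R)
    set C0 : ℝ := (u:ℝ) * (L' ^ d * mu ^ d) with hC0
    have hAeq : ∀ n : ℕ, ((u:ℝ) * (b:ℝ)^n) * (L' * mu^(n+1)) ^ d = C0 * q ^ n := by
      intro n
      rw [Real.mul_rpow hL'.le (by positivity)]
      have h3 : ((mu^(n+1) : ℝ)) ^ d = (mu ^ d) ^ (n+1) := by
        rw [← Real.rpow_natCast mu (n+1), ← Real.rpow_mul hmu0.le,
          mul_comm, Real.rpow_mul hmu0.le, Real.rpow_natCast]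
      rw [h3, hC0, hq]
      ring
    have hsumle : ∀ n : ℕ,
        (∑ c : Fin u × (Fin n → Fin (u-1)), EMetric.diam (t n c) ^ d)
          ≤ ENNReal.ofReal (C0 * q ^ n) := by
      intro n
      have hcard : Fintype.card (Fin u × (Fin n → Fin (u-1))) = u * (u-1)^n := by
        simp [Fintype.card_prod, Fintype.card_fun]
      calc (∑ c : Fin u × (Fin n → Fin (u-1)), EMetric.diam (t n c) ^ d)
          ≤ ∑ _c : Fin u × (Fin n → Fin (u-1)), ENNReal.ofReal (L' * mu^(n+1)) ^ d := by
            apply Finset.sum_le_sum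
            intro c _
            exact ENNReal.rpow_le_rpow (hdiam n c) hd0.le
        _ = (Fintype.card (Fin u × (Fin n → Fin (u-1))) : ℝ≥0∞)
              * ENNReal.ofReal (L' * mu^(n+1)) ^ d := by
            rw [Finset.sum_const, nsmul_eq_mul]
            congr 1
        _ = ENNReal.ofReal ((u:ℝ) * (b:ℝ)^n) * ENNReal.ofReal ((L' * mu^(n+1)) ^ d) := by
            rw [hcard, ENNReal.ofReal_rpow_of_pos (by positivity)]
            congr 1
            rw [← ENNReal.ofReal_natCast]
            congr 1
            push_cast
            rfl
        _ = ENNReal.ofReal (((u:ℝ) * (b:ℝ)^n) * (L' * mu^(n+1)) ^ d) := by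
            rw [← ENNReal.ofReal_mul (by positivity)]
        _ = ENNReal.ofReal (C0 * q ^ n) := by rw [hAeq n]
    have hAtend : Filter.Tendsto (fun n : ℕ => ENNReal.ofReal (C0 * q ^ n))
        Filter.atTop (nhds 0) := by
      have h1 : Filter.Tendsto (fun n : ℕ => C0 * q ^ n) Filter.atTop (nhds 0) := by
        simpa using (tendsto_pow_atTop_nhds_zero_of_lt_one hq0 hq1).const_mul C0
      simpa using ENNReal.tendsto_ofReal h1
    have hlim0 : Filter.liminf (fun n : ℕ =>
        ∑ c : Fin u × (Fin n → Fin (u-1)), Metric.ediam (t n c) ^ d) Filter.atTop = 0 := by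
      apply le_antisymm _ zero_le
      calc Filter.liminf (fun n : ℕ =>
          ∑ c : Fin u × (Fin n → Fin (u-1)), Metric.ediam (t n c) ^ d) Filter.atTop
          ≤ Filter.liminf (fun n : ℕ => ENNReal.ofReal (C0 * q ^ n)) Filter.atTop :=
            Filter.liminf_le_liminf (Filter.Eventually.of_forall hsumle)
        _ = 0 := hAtend.liminf_eq
    rw [hlim0] at hmeas
    rw [le_zero_iff.mp hmeas] at hd'
    exact ENNReal.zero_ne_top hd'
end
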